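/- arXiv:1305.1815 — 4 statements merged into one kernel-verified Lean document; each statement's English description precedes it below -/
import Mathlib

section
/- Let X be an Alexandrov space of finite height. Then a closed subset A of X is irreducible if and only if A is the closure of a singleton, i.e., there exists a ∈ A with A = closure {a}. -/
/-- The height of a topological space: the supremum of lengths of strictly
increasing chains of point closures, as an element of `WithBot ℕ∞`. -/
noncomputable def topHeight (X : Type*) [TopologicalSpace X] : WithBot ℕ∞ :=
  Order.krullDim {S : Set X // ∃ x : X, S = closure {x}}

lemma krullDim_eq_top_of_strictMono_nat {α : Type*} [Preorder α] (g : ℕ → α)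
    (hg : StrictMono g) : Order.krullDim α = ⊤ := by
  have : InfiniteDimensionalOrder α :=
    ⟨fun n => ⟨LTSeries.mk n (fun i => g i) (fun i j h => hg h), rfl⟩⟩
  exact Order.krullDim_eq_top

lemma exists_maximal_of_krullDim_ne_top {α : Type*} [Preorder α]
    (h : Order.krullDim α ≠ ⊤) {S : Set α} (hS : S.Nonempty) :
    ∃ m ∈ S, ∀ s ∈ S, ¬ m < s := by
  by_contra hc
  push_neg at hc
  obtain ⟨s₀, hs₀⟩ := hS
  choose f hf₁ hf₂ using hc
  let g : ℕ → {x // x ∈ S} := fun n => Nat.rec ⟨s₀, hs₀⟩ (fun _ p => ⟨f p.1 p.2, hf₁ p.1 p.2⟩) n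
  have hstep : ∀ n, (g n).1 < (g (n+1)).1 := fun n => hf₂ (g n).1 (g n).2
  have hmono : StrictMono (fun n => (g n).1) := strictMono_nat_of_lt_succ hstep
  exact h (krullDim_eq_top_of_strictMono_nat _ hmono)

/-- In an Alexandrov space of finite height, a closed subset `A` is irreducible
if and only if `A` is the closure of a point of `A`. -/
theorem isIrreducible_iff_eq_closure_singleton {X : Type*} [TopologicalSpace X]
    [AlexandrovDiscrete X] (hfin : topHeight X ≠ ⊤)
    (A : Set X) (hA : IsClosed A) :
    IsIrreducible A ↔ ∃ a ∈ A, A = closure {a} := by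
  constructor
  · rintro ⟨⟨a₀, ha₀⟩, hpre⟩
    -- the poset of point closures
    set P := {S : Set X // ∃ x : X, S = closure {x}} with hP
    set S : Set P := {p : P | ∃ x ∈ A, p.1 = closure {x}} with hSdef
    have hSne : S.Nonempty := ⟨⟨closure {a₀}, a₀, rfl⟩, a₀, ha₀, rfl⟩
    obtain ⟨m, ⟨a, haA, hma⟩, hmax⟩ := exists_maximal_of_krullDim_ne_top hfin hSne
    refine ⟨a, haA, ?_⟩
    have hsub : closure {a} ⊆ A := hA.closure_subset_iff.2 (Set.singleton_subset_iff.2 haA)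
    refine Set.Subset.antisymm (fun x hx => ?_) hsub
    -- use irreducibility with minimal open neighborhoods of a and x
    obtain ⟨z, hzA, hzU, hzV⟩ := hpre (nhdsKer {a}) (nhdsKer {x}) isOpen_nhdsKer
      isOpen_nhdsKer ⟨a, haA, subset_nhdsKer rfl⟩ ⟨x, hx, subset_nhdsKer rfl⟩
    -- a ∈ closure {z}
    have haz : a ∈ closure ({z} : Set X) := by
      rw [mem_closure_iff]
      intro o ho hao
      exact ⟨z, (nhdsKer_minimal (Set.singleton_subset_iff.2 hao) ho) hzU, rfl⟩
    have hxz : x ∈ closure ({z} : Set X) := by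
      rw [mem_closure_iff]
      intro o ho hxo
      exact ⟨z, (nhdsKer_minimal (Set.singleton_subset_iff.2 hxo) ho) hzV, rfl⟩
    have hle : closure ({a} : Set X) ⊆ closure ({z} : Set X) :=
      closure_minimal (Set.singleton_subset_iff.2 haz) isClosed_closure
    set pz : P := ⟨closure {z}, z, rfl⟩ with hpz
    have hpzS : pz ∈ S := ⟨z, hzA, rfl⟩
    have hmle : m ≤ pz := by
      show m.1 ≤ pz.1
      rw [hma]
      exact hle
    have hmeq : m = pz := by
      by_contra hne
      exact hmax pz hpzS (lt_of_le_of_ne hmle hne)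
    have : closure ({a} : Set X) = closure ({z} : Set X) := by
      have := congrArg Subtype.val hmeq
      rw [hma] at this
      exact this
    rw [this]
    exact hxz
  · rintro ⟨a, -, rfl⟩
    exact isIrreducible_singleton.closure
end

section
/- Every Alexandrov space of finite height is quasi-sober: every nonempty irreducible closed subset has a generic point, i.e., is the closure of a singleton. -/
lemma topHeight_eq_top_of_all {X : Type*} [TopologicalSpace X]
    (h : ∀ n : ℕ, (n : WithBot ℕ∞) ≤ topHeight X) : topHeight X = ⊤ := by
  set d := topHeight X with hd
  clear_value d
  induction d using WithBot.recBotCoe with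
  | bot => exact absurd (h 0) (by simp)
  | coe m =>
    induction m using WithTop.recTopCoe with
    | top => rfl
    | coe k =>
      have := h (k + 1)
      exfalso
      have h2 : ((k + 1 : ℕ) : WithBot ℕ∞) ≤ ((k : ℕ) : WithBot ℕ∞) := this
      exact absurd (by exact_mod_cast h2 : k + 1 ≤ k) (by omega)

lemma exists_closure_max {X : Type*} [TopologicalSpace X]
    (hfin : topHeight X ≠ ⊤) (T : Set X) (hne : T.Nonempty) :
    ∃ x ∈ T, ∀ z ∈ T, closure ({x} : Set X) ⊆ closure {z} →
      closure ({z} : Set X) ⊆ closure {x} := by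
  by_contra h
  push_neg at h
  apply hfin
  apply topHeight_eq_top_of_all
  -- build a strictly increasing sequence of closures
  have hstep : ∀ x : T, ∃ z : T,
      closure ({(x : X)} : Set X) ⊂ closure {(z : X)} := by
    rintro ⟨x, hx⟩
    obtain ⟨z, hz, h1, h2⟩ := h x hx
    exact ⟨⟨z, hz⟩, h1, fun hc => h2 hc⟩
  choose f hf using hstep
  have : Nonempty T := ⟨⟨hne.choose, hne.choose_spec⟩⟩
  set g : ℕ → T := fun n => f^[n] this.some with hg
  have hmono : StrictMono fun n : ℕ =>
      (⟨closure ({(g n : X)} : Set X), (g n : X), rfl⟩ :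
        {S : Set X // ∃ x : X, S = closure {x}}) := by
    apply strictMono_nat_of_lt_succ
    intro n
    have : g (n + 1) = f (g n) := by
      simp only [hg, Function.iterate_succ_apply']
    rw [this]
    exact hf (g n)
  intro n
  let p : LTSeries {S : Set X // ∃ x : X, S = closure {x}} :=
    LTSeries.mk n (fun i => _) (hmono.comp fun _ _ hij => hij : StrictMono fun i : Fin (n+1) => _)
  have := Order.LTSeries.length_le_krullDim p
  exact this

/-- Every Alexandrov space of finite height is quasi-sober: every nonempty
irreducible closed subset has a generic point. -/
theorem quasiSober_of_alexandrov_finite_height {X : Type*} [TopologicalSpace X]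
    [AlexandrovDiscrete X] (hfin : topHeight X ≠ ⊤) :
    QuasiSober X := by
  constructor
  intro T hT hTc
  obtain ⟨x, hxT, hmax⟩ := exists_closure_max hfin T hT.1
  refine ⟨x, le_antisymm (closure_minimal (Set.singleton_subset_iff.2 hxT) hTc) ?_⟩
  intro y hy
  have h1 : (T ∩ nhdsKer {x}).Nonempty :=
    ⟨x, hxT, subset_nhdsKer rfl⟩
  have h2 : (T ∩ nhdsKer {y}).Nonempty :=
    ⟨y, hy, subset_nhdsKer rfl⟩
  obtain ⟨z, hzT, hzx, hzy⟩ :=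
    hT.2 (nhdsKer {x}) (nhdsKer {y}) isOpen_nhdsKer isOpen_nhdsKer h1 h2
  have hx : z ⤳ x := by
    rcases mem_nhdsKer_iff_specializes.1 hzx with ⟨w, hw, hs⟩
    rwa [Set.mem_singleton_iff.1 hw] at hs
  have hy' : z ⤳ y := by
    rcases mem_nhdsKer_iff_specializes.1 hzy with ⟨w, hw, hs⟩
    rwa [Set.mem_singleton_iff.1 hw] at hs
  have hsub : closure ({z} : Set X) ⊆ closure {x} :=
    hmax z hzT (specializes_iff_closure_subset.1 hx)
  exact hsub hy'.mem_closure
end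

section
/- An Alexandrov space X has finite Krull dimension if and only if X has finite height. -/
open Order TopologicalSpace Topology Set in
/-- In an Alexandrov space, given irreducible closeds `C < C'` and `x ∈ C`, there is `y ∈ C'`
whose point closure strictly contains that of `x`. -/
lemma TopHeightAux.key {X : Type*} [TopologicalSpace X] [AlexandrovDiscrete X]
    (C C' : IrreducibleCloseds X) (h : C < C') {x : X} (hx : x ∈ (C : Set X)) :
    ∃ y : X, y ∈ (C' : Set X) ∧ closure ({x} : Set X) < closure ({y} : Set X) := by
  have hlt : (C : Set X) ⊂ (C' : Set X) := h
  obtain ⟨z, hz, hzC⟩ := exists_of_ssubset hlt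
  obtain ⟨y, hyC', hyU, hyc⟩ := C'.isIrreducible'.2 (nhdsKer {x}) ((C : Set X)ᶜ)
    isOpen_nhdsKer C.isClosed'.isOpen_compl
    ⟨x, hlt.1 hx, subset_nhdsKer rfl⟩ ⟨z, hz, hzC⟩
  have hspec : x ∈ closure ({y} : Set X) :=
    (mem_nhdsKer_singleton.mp hyU).mem_closure
  refine ⟨y, hyC', lt_of_le_of_ne (closure_minimal (by simpa using hspec) isClosed_closure) ?_⟩
  intro he
  have : y ∈ closure ({x} : Set X) := he ▸ subset_closure rfl
  exact hyc (closure_minimal (singleton_subset_iff.2 hx) C.isClosed' this)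

namespace TopHeightAux

open Order TopologicalSpace Topology Set

variable {X : Type*} [TopologicalSpace X] [AlexandrovDiscrete X]

/-- Choice of a next point. -/
noncomputable def nextPt (C C' : IrreducibleCloseds X) (x : X) : X := by
  classical
  exact if h : C < C' ∧ x ∈ (C : Set X) then (key C C' h.1 h.2).choose else x

lemma nextPt_spec {C C' : IrreducibleCloseds X} (h : C < C') {x : X} (hx : x ∈ (C : Set X)) :
    nextPt C C' x ∈ (C' : Set X) ∧
      closure ({x} : Set X) < closure ({nextPt C C' x} : Set X) := by
  classical
  rw [nextPt]
  simp only [dif_pos (⟨h, hx⟩ : C < C' ∧ x ∈ (C : Set X))]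
  exact (key C C' h hx).choose_spec

variable (p : LTSeries (IrreducibleCloseds X))

/-- The sequence of points. -/
noncomputable def seqPt : ℕ → X
  | 0 => (p 0).isIrreducible'.nonempty.choose
  | (i + 1) => nextPt (p ⟨min i p.length, by omega⟩) (p ⟨min (i+1) p.length, by omega⟩)
      (seqPt i)

lemma nextPt_of_not {C C' : IrreducibleCloseds X} (h : ¬ C < C') (x : X) :
    nextPt C C' x = x := by
  classical
  rw [nextPt]
  rw [dif_neg (fun hc => h hc.1)]

lemma seqPt_mem : ∀ i, seqPt p i ∈
    (p ⟨min i p.length, Nat.lt_succ_of_le (min_le_right _ _)⟩ : Set X) := by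
  intro i
  induction i with
  | zero =>
    have he : (⟨min 0 p.length, Nat.lt_succ_of_le (min_le_right _ _)⟩ : Fin (p.length + 1)) = 0 :=
      Fin.ext (by simp)
    rw [he]
    exact (p 0).isIrreducible'.nonempty.choose_spec
  | succ i ih =>
    by_cases hi : i + 1 ≤ p.length
    · have hlt : p ⟨min i p.length, by omega⟩ < p ⟨min (i+1) p.length, by omega⟩ := by
        apply p.strictMono
        simp only [Fin.lt_def]
        omega
      exact (nextPt_spec hlt ih).1
    · have he : (⟨min (i+1) p.length, Nat.lt_succ_of_le (min_le_right _ _)⟩ : Fin (p.length + 1))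
          = ⟨min i p.length, Nat.lt_succ_of_le (min_le_right _ _)⟩ := Fin.ext (by simp; omega)
      have hne : ¬ p ⟨min i p.length, Nat.lt_succ_of_le (min_le_right _ _)⟩
          < p ⟨min (i+1) p.length, Nat.lt_succ_of_le (min_le_right _ _)⟩ := by
        rw [he]; exact lt_irrefl _
      show nextPt _ _ _ ∈ _
      rw [nextPt_of_not hne, he]
      exact ih

lemma seqPt_lt : ∀ i, i + 1 ≤ p.length →
    closure ({seqPt p i} : Set X) < closure ({seqPt p (i+1)} : Set X) := by
  intro i hi
  have hlt : p ⟨min i p.length, by omega⟩ < p ⟨min (i+1) p.length, by omega⟩ := by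
    apply p.strictMono
    simp only [Fin.lt_def]
    omega
  exact (nextPt_spec hlt (seqPt_mem p i)).2

theorem dim_eq_height : topologicalKrullDim X = topHeight X := by
  apply le_antisymm
  · refine iSup_le fun p => ?_
    let q : LTSeries {S : Set X // ∃ x : X, S = closure {x}} :=
      ⟨p.length, fun i => ⟨closure {seqPt p i.val}, seqPt p i.val, rfl⟩,
        fun i => by
          have := seqPt_lt p i.val (by omega)
          show (_ : {S : Set X // ∃ x : X, S = closure {x}}) < _
          exact Subtype.mk_lt_mk.2 (by simpa using this)⟩
    exact Order.LTSeries.length_le_krullDim q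
  · refine krullDim_le_of_strictMono
      (fun S => ⟨S.1, by obtain ⟨x, hx⟩ := S.2; exact hx ▸ isIrreducible_singleton.closure,
        by obtain ⟨x, hx⟩ := S.2; exact hx ▸ isClosed_closure⟩) ?_
    intro a b hab
    exact hab

end TopHeightAux

/-- An Alexandrov space has finite Krull dimension iff it has finite height. -/
theorem topologicalKrullDim_ne_top_iff_topHeight_ne_top {X : Type*} [TopologicalSpace X]
    [AlexandrovDiscrete X] :
    topologicalKrullDim X ≠ ⊤ ↔ topHeight X ≠ ⊤ := by
  rw [TopHeightAux.dim_eq_height]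
end

section
/- For an Alexandrov space X of finite height, the Krull dimension of X equals the height of X. -/
section aux

variable {X : Type*} [TopologicalSpace X]

/-- Key lemma: in an Alexandrov space of finite height, every irreducible closed
set is a point closure. -/
lemma exists_closure_eq_of_isIrreducible [AlexandrovDiscrete X]
    (hfin : topHeight X ≠ ⊤) {T : Set X} (hirr : IsIrreducible T) (hcl : IsClosed T) :
    ∃ x : X, T = closure {x} := by
  classical
  set P := {S : Set X // ∃ x : X, S = closure {x}}
  -- the set of point closures of points of T
  set D : Set P := {p : P | ∃ x ∈ T, (p : Set X) = closure {x}} with hD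
  have hx₀ := hirr.1
  obtain ⟨x₀, hx₀T⟩ := hx₀
  have hDne : D.Nonempty := ⟨⟨closure {x₀}, x₀, rfl⟩, x₀, hx₀T, rfl⟩
  -- D is directed
  have hdir : ∀ p ∈ D, ∀ q ∈ D, ∃ r ∈ D, p ≤ r ∧ q ≤ r := by
    rintro p ⟨x, hxT, hp⟩ q ⟨y, hyT, hq⟩
    have hU : IsOpen (nhdsKer ({x} : Set X)) := isOpen_nhdsKer
    have hV : IsOpen (nhdsKer ({y} : Set X)) := isOpen_nhdsKer
    have hxU : x ∈ nhdsKer ({x} : Set X) := subset_nhdsKer rfl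
    have hyV : y ∈ nhdsKer ({y} : Set X) := subset_nhdsKer rfl
    obtain ⟨z, hzT, hzU, hzV⟩ := hirr.2 _ _ hU hV ⟨x, hxT, hxU⟩ ⟨y, hyT, hyV⟩
    have hzx : x ∈ closure ({z} : Set X) :=
      specializes_iff_mem_closure.mp (mem_nhdsKer_singleton.mp hzU)
    have hzy : y ∈ closure ({z} : Set X) :=
      specializes_iff_mem_closure.mp (mem_nhdsKer_singleton.mp hzV)
    refine ⟨⟨closure {z}, z, rfl⟩, ⟨z, hzT, rfl⟩, ?_, ?_⟩
    · show (p : Set X) ⊆ closure {z}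
      rw [hp]
      exact closure_minimal (Set.singleton_subset_iff.mpr hzx) isClosed_closure
    · show (q : Set X) ⊆ closure {z}
      rw [hq]
      exact closure_minimal (Set.singleton_subset_iff.mpr hzy) isClosed_closure
  -- D has a maximal element
  have hmax : ∃ m ∈ D, ∀ p ∈ D, ¬ m < p := by
    by_contra h
    push_neg at h
    -- construct a strictly increasing sequence, contradicting finite height
    have h' : ∀ d : D, ∃ d' : D, (d : P) < d' := by
      rintro ⟨d, hd⟩
      obtain ⟨p, hpD, hlt⟩ := h d hd
      exact ⟨⟨p, hpD⟩, hlt⟩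
    choose g hg using h'
    have : Nonempty D := ⟨⟨hDne.choose, hDne.choose_spec⟩⟩
    obtain ⟨d₀⟩ := this
    let f : ℕ → D := fun n => g^[n] d₀
    have hmono : StrictMono (fun n => ((f n : P))) := by
      apply strictMono_nat_of_lt_succ
      intro n
      have : f (n + 1) = g (f n) := by
        simp only [f, Function.iterate_succ', Function.comp_apply]
      rw [this]
      exact hg (f n)
    have : Order.krullDim ℕ ≤ Order.krullDim P := Order.krullDim_le_of_strictMono _ hmono
    rw [Order.krullDim_nat] at this
    exact hfin (top_le_iff.mp this)
  obtain ⟨m, hmD, hmmax⟩ := hmax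
  -- m is a maximum of D
  have hmmax' : ∀ p ∈ D, p ≤ m := by
    intro p hpD
    obtain ⟨r, hrD, hpr, hmr⟩ := hdir p hpD m hmD
    have : r = m := by
      by_contra hne
      exact hmmax r hrD (lt_of_le_of_ne hmr (Ne.symm hne))
    exact this ▸ hpr
  obtain ⟨w, hwT, hw⟩ := hmD
  refine ⟨w, le_antisymm ?_ ?_⟩
  · intro y hyT
    have : (⟨closure {y}, y, rfl⟩ : P) ≤ m := hmmax' _ ⟨y, hyT, rfl⟩
    have hsub : closure ({y} : Set X) ⊆ closure {w} := by
      have h2 : (⟨closure {y}, y, rfl⟩ : P).val ≤ (m : Set X) := this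
      rwa [hw] at h2
    exact hsub (subset_closure rfl)
  · exact closure_minimal (Set.singleton_subset_iff.mpr hwT) hcl

end aux

/-- For an Alexandrov space of finite height, the Krull dimension equals the height. -/
theorem topologicalKrullDim_eq_topHeight {X : Type*} [TopologicalSpace X]
    [AlexandrovDiscrete X] (hfin : topHeight X ≠ ⊤) :
    topologicalKrullDim X = topHeight X := by
  classical
  have e : {S : Set X // ∃ x : X, S = closure {x}} ≃o TopologicalSpace.IrreducibleCloseds X :=
    { toFun := fun p =>
        ⟨(p : Set X), by
          obtain ⟨x, hx⟩ := p.2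
          rw [hx]; exact isIrreducible_singleton.closure, by
          obtain ⟨x, hx⟩ := p.2
          rw [hx]; exact isClosed_closure⟩
      invFun := fun T =>
        ⟨T.carrier, exists_closure_eq_of_isIrreducible hfin T.isIrreducible' T.isClosed'⟩
      left_inv := fun p => rfl
      right_inv := fun T => rfl
      map_rel_iff' := Iff.rfl }
  rw [topologicalKrullDim, topHeight, Order.krullDim_eq_of_orderIso e]
end
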